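/- Let L be a locally compact Hausdorff topological group with a nonzero left Haar measure μ, M a compact open subgroup of L, and x ∈ L. Then the indices [M : M ∩ xMx⁻¹] and [M : M ∩ x⁻¹Mx] are finite and μ(xMx⁻¹) · [M : M ∩ xMx⁻¹] = μ(M) · [M : M ∩ x⁻¹Mx]. Equivalently, the modular function Δ of L satisfies Δ(x) = [M : M ∩ xMx⁻¹] / [M : M ∩ x⁻¹Mx] for all x ∈ L. -/

import Mathlib

open MeasureTheory
open scoped ENNReal Pointwise

/-- Coset decomposition: if `H ≤ K` are subgroups, `H` open, and `H` has finite index in `K`,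
then `μ(K) = [K : H] · μ(H)` for a left-invariant measure `μ`. -/
lemma meas_eq_relIndex_mul {L : Type*} [Group L] [TopologicalSpace L] [IsTopologicalGroup L]
    [MeasurableSpace L] [BorelSpace L] (μ : Measure L) [μ.IsMulLeftInvariant]
    (H K : Subgroup L) (hHK : H ≤ K) (hHo : IsOpen (H : Set L))
    (hfin : H.relIndex K ≠ 0) :
    μ (K : Set L) = (H.relIndex K : ℝ≥0∞) * μ (H : Set L) := by
  set Q := K ⧸ H.subgroupOf K with hQ
  have hcard : Nat.card Q = H.relIndex K := rfl
  have hQfin : Finite Q := by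
    have h : Nat.card Q ≠ 0 := hcard ▸ hfin
    exact (Nat.card_ne_zero.mp h).2
  haveI := hQfin
  haveI : Fintype Q := Fintype.ofFinite Q
  set f : Q → Set L := fun q => ((Quotient.out q : K) : L) • (H : Set L) with hf
  have hKeq : (K : Set L) = ⋃ q : Q, f q := by
    ext y
    constructor
    · intro hy
      set q₀ : Q := QuotientGroup.mk (⟨y, hy⟩ : K) with hq₀
      refine Set.mem_iUnion.2 ⟨q₀, ?_⟩
      have h1 : (QuotientGroup.mk (Quotient.out q₀) : Q) = q₀ := QuotientGroup.out_eq' q₀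
      have h2 : (Quotient.out q₀)⁻¹ * (⟨y, hy⟩ : K) ∈ H.subgroupOf K := by
        rw [← QuotientGroup.eq]
        rw [h1]
      rw [Subgroup.mem_subgroupOf] at h2
      refine ⟨((Quotient.out q₀ : K) : L)⁻¹ * y, h2, ?_⟩
      simp [smul_eq_mul]
    · intro hy
      obtain ⟨q, hq⟩ := Set.mem_iUnion.1 hy
      obtain ⟨h, hh, rfl⟩ := hq
      exact K.mul_mem (Quotient.out q : K).2 (hHK hh)
  have hdisj : Pairwise (Function.onFun Disjoint f) := by
    intro q₁ q₂ hne
    rw [Function.onFun, Set.disjoint_left]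
    rintro z ⟨h₁, hh₁, rfl⟩ ⟨h₂, hh₂, heq⟩
    simp only [smul_eq_mul] at heq
    apply hne
    have h' : ((Quotient.out q₂ : K) : L) = ((Quotient.out q₁ : K) : L) * h₁ * h₂⁻¹ := by
      rw [← heq, mul_assoc, mul_inv_cancel, mul_one]
    have hcoe : ((Quotient.out q₁ : K) : L)⁻¹ * ((Quotient.out q₂ : K) : L) = h₁ * h₂⁻¹ := by
      rw [h']; group
    have key : (Quotient.out q₁ : K)⁻¹ * (Quotient.out q₂ : K) ∈ H.subgroupOf K := by
      rw [Subgroup.mem_subgroupOf]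
      push_cast
      rw [hcoe]
      exact H.mul_mem hh₁ (H.inv_mem hh₂)
    have h3 := (QuotientGroup.eq (s := H.subgroupOf K)).2 key
    rwa [QuotientGroup.out_eq', QuotientGroup.out_eq'] at h3
  have hmeas : ∀ q : Q, MeasurableSet (f q) := fun q =>
    (hHo.smul (((Quotient.out q : K) : L))).measurableSet
  have hμf : ∀ q : Q, μ (f q) = μ (H : Set L) := by
    intro q
    have hpre : f q = (fun z => ((Quotient.out q : K) : L)⁻¹ * z) ⁻¹' (H : Set L) := by
      ext z
      rw [hf]
      simp [Set.mem_smul_set_iff_inv_smul_mem, smul_eq_mul]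
    rw [hpre, measure_preimage_mul]
  rw [hKeq, measure_iUnion hdisj hmeas]
  simp_rw [hμf]
  rw [tsum_fintype, Finset.sum_const, Finset.card_univ, nsmul_eq_mul,
    ← Nat.card_eq_fintype_card, hcard]

/-- **Schlichting.** Let `L` be a locally compact Hausdorff group with a
nonzero left Haar measure `μ`, `M` a compact open subgroup, and `x ∈ L`.  Then the indices
`[M : M ∩ x M x⁻¹]` and `[M : M ∩ x⁻¹ M x]` are finite and
`μ(x M x⁻¹) · [M : M ∩ x M x⁻¹] = μ(M) · [M : M ∩ x⁻¹ M x]`, i.e. the modular function of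
`L` is the index ratio. -/
theorem stmt_13 {L : Type*} [Group L] [TopologicalSpace L] [IsTopologicalGroup L]
    [LocallyCompactSpace L] [T2Space L] [MeasurableSpace L] [BorelSpace L]
    (μ : Measure L) [μ.IsHaarMeasure]
    (M : Subgroup L) (hMc : IsCompact (M : Set L)) (hMo : IsOpen (M : Set L))
    (x : L) :
    ((M ⊓ Subgroup.map (MulAut.conj x).toMonoidHom M).subgroupOf M).index ≠ 0 ∧
    ((M ⊓ Subgroup.map (MulAut.conj x⁻¹).toMonoidHom M).subgroupOf M).index ≠ 0 ∧
    μ {y : L | x⁻¹ * y * x ∈ M} *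
        (((M ⊓ Subgroup.map (MulAut.conj x).toMonoidHom M).subgroupOf M).index : ℝ≥0∞) =
      μ (M : Set L) *
        (((M ⊓ Subgroup.map (MulAut.conj x⁻¹).toMonoidHom M).subgroupOf M).index : ℝ≥0∞) := by
  set N := Subgroup.map (MulAut.conj x).toMonoidHom M with hN
  set N' := Subgroup.map (MulAut.conj x⁻¹).toMonoidHom M with hN'
  -- `N = x M x⁻¹` as a set is the preimage of `M` under `y ↦ x⁻¹ y x`
  have hNset : (N : Set L) = (fun y => x⁻¹ * y * x) ⁻¹' (M : Set L) := by
    ext y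
    simp only [hN, SetLike.mem_coe, Subgroup.mem_map, Set.mem_preimage]
    constructor
    · rintro ⟨m, hm, rfl⟩
      simpa [MulAut.conj_apply, mul_assoc] using hm
    · intro h
      exact ⟨x⁻¹ * y * x, h, by simp [MulAut.conj_apply]; group⟩
  have hN'set : (N' : Set L) = (fun y => x * y * x⁻¹) ⁻¹' (M : Set L) := by
    ext y
    simp only [hN', SetLike.mem_coe, Subgroup.mem_map, Set.mem_preimage]
    constructor
    · rintro ⟨m, hm, rfl⟩
      simpa [MulAut.conj_apply, mul_assoc] using hm
    · intro h
      exact ⟨x * y * x⁻¹, h, by simp [MulAut.conj_apply]; group⟩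
  have hNo : IsOpen (N : Set L) := by
    rw [hNset]
    exact hMo.preimage ((continuous_mul_right x).comp (continuous_mul_left x⁻¹))
  have hN'o : IsOpen (N' : Set L) := by
    rw [hN'set]
    exact hMo.preimage ((continuous_mul_right x⁻¹).comp (continuous_mul_left x))
  have hNc : IsCompact (N : Set L) := by
    have : (N : Set L) = (fun y => x * y * x⁻¹) '' (M : Set L) := by
      rw [hN, Subgroup.coe_map]; rfl
    rw [this]
    exact hMc.image ((continuous_mul_right x⁻¹).comp (continuous_mul_left x))
  -- finiteness of relative indices of open subgroups in compact open subgroups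
  have hfinkey : ∀ (A B : Subgroup L), IsCompact (A : Set L) → IsOpen (B : Set L) →
      (A ⊓ B).relIndex A ≠ 0 := by
    intro A B hAc hBo
    haveI : CompactSpace A := isCompact_iff_compactSpace.mp hAc
    haveI : Finite (A ⧸ (A ⊓ B).subgroupOf A) := by
      apply Subgroup.quotient_finite_of_isOpen
      have hset : (((A ⊓ B).subgroupOf A : Subgroup A) : Set A) =
          ((↑) : A → L) ⁻¹' (B : Set L) := by
        ext a
        simp [Subgroup.mem_subgroupOf, a.2]
      rw [hset]
      exact hBo.preimage continuous_subtype_val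
    exact Subgroup.index_ne_zero_of_finite
  have hfin1 : (M ⊓ N).relIndex M ≠ 0 := hfinkey M N hMc hNo
  have hfin1' : (M ⊓ N').relIndex M ≠ 0 := hfinkey M N' hMc hN'o
  have hfin2 : (N ⊓ M).relIndex N ≠ 0 := hfinkey N M hNc hMo
  -- the second index equals the index of `N ⊓ M` in `N`, by conjugating with `x`
  have hconj : (M ⊓ N').relIndex M = (N ⊓ M).relIndex N := by
    have e1 : Subgroup.comap (MulAut.conj x).toMonoidHom N = M :=
      Subgroup.comap_map_eq_self_of_injective (MulAut.conj x).injective M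
    have e2 : Subgroup.comap (MulAut.conj x).toMonoidHom M = N' := by
      rw [hN']
      have : MulAut.conj x⁻¹ = (MulAut.conj x).symm := by
        ext y; simp [MulAut.conj_apply]
      rw [this]
      exact Subgroup.comap_equiv_eq_map_symm' (MulAut.conj x) M
    have := Subgroup.relIndex_comap (H := N ⊓ M) (MulAut.conj x).toMonoidHom M
    rw [Subgroup.comap_inf, e1, e2, ← hN] at this
    rw [this]
  -- measures via coset decomposition
  have hMNo : IsOpen ((M ⊓ N : Subgroup L) : Set L) := by
    rw [Subgroup.coe_inf]; exact hMo.inter hNo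
  have hμM : μ (M : Set L) = ((M ⊓ N).relIndex M : ℝ≥0∞) * μ ((M ⊓ N : Subgroup L) : Set L) :=
    meas_eq_relIndex_mul μ (M ⊓ N) M inf_le_left hMNo hfin1
  have hμN : μ (N : Set L) = ((M ⊓ N).relIndex N : ℝ≥0∞) * μ ((M ⊓ N : Subgroup L) : Set L) := by
    have h := meas_eq_relIndex_mul μ (N ⊓ M) N inf_le_left
      (by rw [Subgroup.coe_inf]; exact hNo.inter hMo) hfin2
    rwa [inf_comm N M] at h
  have hSN : {y : L | x⁻¹ * y * x ∈ M} = (N : Set L) := by rw [hNset]; rfl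
  have hidx1 : ((M ⊓ N).subgroupOf M).index = (M ⊓ N).relIndex M := rfl
  have hidx2 : ((M ⊓ N').subgroupOf M).index = (M ⊓ N').relIndex M := rfl
  refine ⟨by rw [hidx1]; exact hfin1, by rw [hidx2]; exact hfin1', ?_⟩
  rw [hSN, hidx1, hidx2, hconj, hμN, hμM]
  have : (M ⊓ N).relIndex N = (N ⊓ M).relIndex N := by rw [inf_comm]
  rw [← this]
  ring
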